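/- For unitaries U_{ij} (1 ≤ i < j ≤ K) on a finite-dimensional Hilbert space, if the K×K block matrix P with identity diagonal blocks, (i,j) block U_{ij} for i < j, and (j,i) block U_{ij}†, is positive semi-definite, then there exist unitaries V₁, ..., V_K such that U_{ij} = V_i V_j† for all i < j (equivalently, the cocycle condition U_{ik} = U_{ij} U_{jk} holds for all i < j < k). -/

import Mathlib

open Matrix Kronecker Finset ComplexOrder

noncomputable section
open scoped Classical

/-- The positive semidefinite square root (removed from Mathlib; old definition restored). -/
def Matrix.PosSemidef.sqrt {n : Type*} [Fintype n] [DecidableEq n] {𝕜 : Type*} [RCLike 𝕜]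
    {A : Matrix n n 𝕜} (hA : A.PosSemidef) : Matrix n n 𝕜 :=
  hA.1.eigenvectorUnitary.1 * diagonal ((↑) ∘ (√·) ∘ hA.1.eigenvalues) *
    (star hA.1.eigenvectorUnitary : Matrix n n 𝕜)

/-- Square root of a matrix: the PSD square root if the matrix is PSD, else 0. -/
def mSqrt {m : Type*} [Fintype m] [DecidableEq m] (A : Matrix m m ℂ) : Matrix m m ℂ :=

  if h : A.PosSemidef then h.sqrt else 0

/-- Operator absolute value `|A| = √(Aᴴ A)`. -/
def mAbs {m : Type*} [Fintype m] [DecidableEq m] (A : Matrix m m ℂ) : Matrix m m ℂ :=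
  (Matrix.posSemidef_conjTranspose_mul_self A).sqrt

/-- Von Neumann entropy (base-2), via eigenvalues of a Hermitian matrix. -/
def vnEntropy {m : Type*} [Fintype m] [DecidableEq m] (ρ : Matrix m m ℂ) : ℝ :=
  if h : ρ.IsHermitian then -∑ i, (h.eigenvalues i) * Real.logb 2 (h.eigenvalues i) else 0

/-- Partial trace over the first tensor factor. -/
def ptraceA {m p : Type*} [Fintype m] [Fintype p] (X : Matrix (m × p) (m × p) ℂ) :
    Matrix p p ℂ := Matrix.of fun a b => ∑ k, X (k, a) (k, b)

/-- Partial trace over the second tensor factor. -/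
def ptraceB {m p : Type*} [Fintype m] [Fintype p] (X : Matrix (m × p) (m × p) ℂ) :
    Matrix m m ℂ := Matrix.of fun a b => ∑ k, X (a, k) (b, k)

/-- Fidelity `F(ρ,σ) = (Tr |√ρ √σ|)²`. -/
def fidelity {m : Type*} [Fintype m] [DecidableEq m] (ρ σ : Matrix m m ℂ) : ℝ :=
  ((mAbs (mSqrt ρ * mSqrt σ)).trace.re) ^ 2
/-- A PSD K×K block matrix with identity diagonal and unitary off-diagonal blocks has
blocks of the form `Vᵢ Vⱼᴴ`. -/
theorem stmt13 (n K : ℕ) (hK : 3 ≤ K)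
    (U : Fin K → Fin K → Matrix (Fin n) (Fin n) ℂ)
    (hunit : ∀ i j, i < j → U i j ∈ Matrix.unitaryGroup (Fin n) ℂ)
    (hPSD : (Matrix.of fun x y : Fin K × Fin n =>
      (if x.1 = y.1 then (1 : Matrix (Fin n) (Fin n) ℂ)
        else if x.1 < y.1 then U x.1 y.1 else (U y.1 x.1)ᴴ) x.2 y.2).PosSemidef) :
    ∃ V : Fin K → Matrix (Fin n) (Fin n) ℂ,
      (∀ i, V i ∈ Matrix.unitaryGroup (Fin n) ℂ) ∧
      ∀ i j, i < j → U i j = V i * (V j)ᴴ := by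
  haveI : NeZero K := ⟨by omega⟩
  set P : Matrix (Fin K × Fin n) (Fin K × Fin n) ℂ := (Matrix.of fun x y : Fin K × Fin n =>
      (if x.1 = y.1 then (1 : Matrix (Fin n) (Fin n) ℂ)
        else if x.1 < y.1 then U x.1 y.1 else (U y.1 x.1)ᴴ) x.2 y.2) with hPdef
  set B : Fin K → Fin K → Matrix (Fin n) (Fin n) ℂ :=
    fun a b => if a = b then 1 else if a < b then U a b else (U b a)ᴴ with hBdef
  have hPB : ∀ (k l : Fin K) (r s : Fin n), P (k, r) (l, s) = B k l r s := by
    intro k l r s; rfl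
  -- key row identity
  have key : ∀ i j k : Fin K, i < j → k ≠ i → k ≠ j → B k i = B k j * (U i j)ᴴ := by
    intro i j k hij hki hkj
    have hij' : i ≠ j := ne_of_lt hij
    have hUU : U i j * (U i j)ᴴ = 1 := by
      simpa [Matrix.star_eq_conjTranspose] using
        Matrix.mem_unitaryGroup_iff.mp (hunit i j hij)
    have main : ∀ x : Fin n → ℂ, B k i *ᵥ x = B k j *ᵥ ((U i j)ᴴ *ᵥ x) := by
      intro x
      set y : Fin n → ℂ := (U i j)ᴴ *ᵥ x with hy
      set z : Fin K × Fin n → ℂ :=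
        fun p => (if p.1 = i then x p.2 else 0) + (if p.1 = j then -(y p.2) else 0) with hz
      have hPz : ∀ (l : Fin K) (r : Fin n),
          (P *ᵥ z) (l, r) = (B l i *ᵥ x) r - (B l j *ᵥ y) r := by
        intro l r
        simp only [mulVec, dotProduct, Fintype.sum_prod_type, hz, hPB, mul_add, mul_ite,
          mul_zero, mul_neg, Finset.sum_add_distrib, Finset.sum_neg_distrib]
        rw [Finset.sum_comm, Finset.sum_comm (γ := Fin n)]
        simp [Finset.sum_ite_eq', sub_eq_add_neg, Finset.sum_comm (γ := Fin n)]
      have hq0 : star z ⬝ᵥ (P *ᵥ z) = 0 := by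
        rw [dotProduct]
        refine Finset.sum_eq_zero fun q _ => ?_
        obtain ⟨l, r⟩ := q
        rcases eq_or_ne l i with rfl | hli
        · have : (P *ᵥ z) (l, r) = 0 := by
            rw [hPz]
            have h1 : B l l = 1 := by simp [hBdef]
            have h2 : B l j = U l j := by simp [hBdef, hij', hij]
            rw [h1, h2, hy, Matrix.mulVec_mulVec, hUU]
            simp
          rw [this, mul_zero]
        rcases eq_or_ne l j with rfl | hlj
        · have : (P *ᵥ z) (l, r) = 0 := by
            rw [hPz]
            have h1 : B l l = 1 := by simp [hBdef]
            have h2 : B l i = (U i l)ᴴ := by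
              simp [hBdef, hij'.symm, not_lt_of_gt hij]
            rw [h1, h2, hy]
            simp
          rw [this, mul_zero]
        · have h0 : star z (l, r) = 0 := by simp [hz, hli, hlj]
          rw [h0, zero_mul]
      have hPz0 : P *ᵥ z = 0 := (hPSD.dotProduct_mulVec_zero_iff z).mp hq0
      funext r
      have := congrFun hPz0 (k, r)
      rw [hPz k r] at this
      have : (B k i *ᵥ x) r - (B k j *ᵥ y) r = 0 := this
      linear_combination this
    funext r s
    have := congrFun (main (Pi.single s 1)) r
    rw [Matrix.mulVec_mulVec] at this
    simpa using this
  -- build V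
  refine ⟨fun i => if i = 0 then 1 else (U 0 i)ᴴ, ?_, ?_⟩
  · intro i
    by_cases hi : i = 0
    · simp [hi]
    · simp only [hi, if_false]
      rw [← Matrix.star_eq_conjTranspose]
      exact Unitary.star_mem (hunit 0 i ((Fin.pos_iff_ne_zero' i).mpr hi))
  · intro i j hij
    have hj0 : j ≠ 0 := by
      intro h
      have : (0 : Fin K) ≤ i := Fin.zero_le i
      exact absurd (h ▸ hij) (not_lt.mpr this)
    by_cases hi : i = 0
    · subst hi
      simp [hj0]
    · have h0i : (0 : Fin K) < i := (Fin.pos_iff_ne_zero' i).mpr hi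
      have hkey : B 0 i = B 0 j * (U i j)ᴴ := key i j 0 hij (Ne.symm hi) (Ne.symm hj0)
      have hB0i : B 0 i = U 0 i := by simp [hBdef, hi, Ne.symm hi, h0i]
      have hB0j : B 0 j = U 0 j := by
        have h0j : (0 : Fin K) < j := h0i.trans hij
        simp [hBdef, Ne.symm hj0, h0j]
      rw [hB0i, hB0j] at hkey
      have hU0i : (U 0 i)ᴴ * U 0 i = 1 := by
        simpa [Matrix.star_eq_conjTranspose] using
          Matrix.mem_unitaryGroup_iff'.mp (hunit 0 i h0i)
      have hUij : (U i j)ᴴ * U i j = 1 := by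
        simpa [Matrix.star_eq_conjTranspose] using
          Matrix.mem_unitaryGroup_iff'.mp (hunit i j hij)
      simp only [hi, if_false, hj0, conjTranspose_conjTranspose]
      calc U i j = 1 * U i j := (one_mul _).symm
        _ = (U 0 i)ᴴ * U 0 i * U i j := by rw [hU0i]
        _ = (U 0 i)ᴴ * (U 0 j * (U i j)ᴴ) * U i j := by rw [← hkey]
        _ = (U 0 i)ᴴ * U 0 j * ((U i j)ᴴ * U i j) := by
            simp only [Matrix.mul_assoc]
        _ = (U 0 i)ᴴ * U 0 j := by rw [hUij, Matrix.mul_one]
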